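/- arXiv:1304.1218 — 4 statements merged into one kernel-verified Lean document; each statement's English description precedes it below -/
import Mathlib

section
/- Let V be a Hausdorff topological real vector space and K a strict closed convex cone in V with associated partial order ≤ (x ≤ y iff y − x ∈ K). Then any nonempty subset S of V which is directed with respect to ≤ and contained in a compact subset of V has a least upper bound with respect to ≤ in V. -/
/-- In a Hausdorff topological real vector space, with a strict closed convex cone `K`
and the order `x ≤ y ↔ y - x ∈ K`, every nonempty directed subset `S` contained in a
compact set has a least upper bound. -/
theorem directed_set_in_compact_has_lub
    (V : Type*) [AddCommGroup V] [Module ℝ V] [TopologicalSpace V]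
    [IsTopologicalAddGroup V] [ContinuousSMul ℝ V] [T2Space V]
    (K : Set V) (hKclosed : IsClosed K) (hKconv : Convex ℝ K)
    (hKcone : ∀ x ∈ K, ∀ t : ℝ, 0 ≤ t → t • x ∈ K)
    (hKstrict : K ∩ (-K) = {0})
    (S : Set V) (hSne : S.Nonempty)
    (hSdir : ∀ x ∈ S, ∀ y ∈ S, ∃ z ∈ S, z - x ∈ K ∧ z - y ∈ K)
    (T : Set V) (hT : IsCompact T) (hST : S ⊆ T) :
    ∃ b : V, (∀ x ∈ S, b - x ∈ K) ∧
      ∀ c : V, (∀ x ∈ S, c - x ∈ K) → c - b ∈ K := by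
  -- K is closed under addition
  have hadd : ∀ u ∈ K, ∀ v ∈ K, u + v ∈ K := by
    intro u hu v hv
    have h := hKconv hu hv (by norm_num : (0:ℝ) ≤ 1/2) (by norm_num : (0:ℝ) ≤ 1/2)
      (by norm_num)
    have h2 := hKcone _ h 2 (by norm_num)
    have : (2:ℝ) • ((1/2 : ℝ) • u + (1/2 : ℝ) • v) = u + v := by
      rw [smul_add, smul_smul, smul_smul]
      norm_num
    rwa [this] at h2
  -- tails
  set B : V → Set V := fun x => closure {y | y ∈ S ∧ y - x ∈ K} with hBdef
  have htail_sub : ∀ x, {y | y ∈ S ∧ y - x ∈ K} ⊆ T := fun x y hy => hST hy.1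
  have hBsubT : ∀ x, B x ⊆ T := by
    intro x
    have : closure {y | y ∈ S ∧ y - x ∈ K} ⊆ closure T :=
      closure_mono (htail_sub x)
    rwa [hT.isClosed.closure_eq] at this
  have hBclosed : ∀ x, IsClosed (B x) := fun x => isClosed_closure
  have hBcompact : ∀ x, IsCompact (B x) :=
    fun x => hT.of_isClosed_subset (hBclosed x) (hBsubT x)
  have hBne : ∀ x ∈ S, (B x).Nonempty := by
    intro x hx
    obtain ⟨z, hz, hzx, _⟩ := hSdir x hx x hx
    exact ⟨z, subset_closure ⟨hz, hzx⟩⟩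
  -- upper-section sets are closed
  have hclosed_up : ∀ x : V, IsClosed {w : V | w - x ∈ K} := by
    intro x
    exact hKclosed.preimage (continuous_id.sub continuous_const)
  have hclosed_down : ∀ c : V, IsClosed {w : V | c - w ∈ K} := by
    intro c
    exact hKclosed.preimage (continuous_const.sub continuous_id)
  -- directedness of the family over S
  haveI : Nonempty S := hSne.to_subtype
  have hdir : Directed (· ⊇ ·) (fun x : S => B x) := by
    rintro ⟨x, hx⟩ ⟨y, hy⟩
    obtain ⟨z, hz, hzx, hzy⟩ := hSdir x hx y hy
    refine ⟨⟨z, hz⟩, ?_, ?_⟩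
    · apply closure_mono
      rintro w ⟨hwS, hwz⟩
      refine ⟨hwS, ?_⟩
      have := hadd _ hwz _ hzx
      simpa [sub_add_sub_cancel] using this
    · apply closure_mono
      rintro w ⟨hwS, hwz⟩
      refine ⟨hwS, ?_⟩
      have := hadd _ hwz _ hzy
      simpa [sub_add_sub_cancel] using this
  have hne : (⋂ x : S, B x).Nonempty :=
    IsCompact.nonempty_iInter_of_directed_nonempty_isCompact_isClosed
      (fun x : S => B (x : V)) hdir (fun x => hBne x x.2)
      (fun x => hBcompact x) (fun x => hBclosed x)
  obtain ⟨b, hb⟩ := hne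
  refine ⟨b, ?_, ?_⟩
  · intro x hx
    have hbB : b ∈ B x := Set.mem_iInter.1 hb ⟨x, hx⟩
    have : B x ⊆ {w : V | w - x ∈ K} := by
      refine (hclosed_up x).closure_subset_iff.2 ?_
      rintro w ⟨_, hw⟩
      exact hw
    exact this hbB
  · intro c hc
    obtain ⟨x, hx⟩ := hSne
    have hbB : b ∈ B x := Set.mem_iInter.1 hb ⟨x, hx⟩
    have : B x ⊆ {w : V | c - w ∈ K} := by
      refine (hclosed_down c).closure_subset_iff.2 ?_
      rintro w ⟨hwS, _⟩
      exact hc w hwS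
    exact this hbB
end

section
/- Let V be a finite-dimensional real normed vector space, K ⊆ V a strict closed convex cone, and β ∈ K. Then the set {α ∈ V | α ∈ K and β − α ∈ K} is compact. -/
/-- In a finite-dimensional real normed vector space, the order interval
`{α | α ∈ K ∧ β - α ∈ K}` of a strict closed convex cone `K` is compact. -/
theorem order_interval_compact
    (V : Type*) [NormedAddCommGroup V] [NormedSpace ℝ V] [FiniteDimensional ℝ V]
    (K : Set V) (hKclosed : IsClosed K) (hKconv : Convex ℝ K)
    (hKcone : ∀ x ∈ K, ∀ t : ℝ, 0 ≤ t → t • x ∈ K)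
    (hKstrict : K ∩ (-K) = {0})
    (β : V) (hβ : β ∈ K) :
    IsCompact {α : V | α ∈ K ∧ β - α ∈ K} := by
  have hSclosed : IsClosed {α : V | α ∈ K ∧ β - α ∈ K} := by
    have : {α : V | α ∈ K ∧ β - α ∈ K} = K ∩ (fun α => β - α) ⁻¹' K := rfl
    rw [this]
    exact hKclosed.inter (hKclosed.preimage (by continuity))
  refine Metric.isCompact_of_isClosed_isBounded hSclosed ?_
  by_contra hb
  rw [isBounded_iff_forall_norm_le] at hb
  push_neg at hb
  choose α hαS hα using fun n : ℕ => hb n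
  have hpos : ∀ n, 0 < ‖α n‖ := fun n => lt_of_le_of_lt (Nat.cast_nonneg n) (hα n)
  set u : ℕ → V := fun n => ‖α n‖⁻¹ • α n with hu
  have husphere : ∀ n, u n ∈ Metric.sphere (0 : V) 1 := by
    intro n
    simp [u, norm_smul, abs_of_pos (inv_pos.2 (hpos n)), inv_mul_cancel₀ (hpos n).ne']
  obtain ⟨x, hx, φ, hmono, hlim⟩ :=
    (isCompact_sphere (0 : V) 1).tendsto_subseq husphere
  have huK : ∀ n, u n ∈ K := fun n => hKcone _ (hαS n).1 _ (inv_nonneg.2 (hpos n).le)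
  have hxK : x ∈ K :=
    hKclosed.mem_of_tendsto hlim (Filter.Eventually.of_forall fun n => huK (φ n))
  have hnorm_atTop : Filter.Tendsto (fun n => ‖α (φ n)‖) Filter.atTop Filter.atTop := by
    apply Filter.tendsto_atTop_mono (f := fun n : ℕ => (n : ℝ))
    · intro n
      exact le_trans (Nat.cast_le.2 (hmono.le_apply)) (hα (φ n)).le
    · exact tendsto_natCast_atTop_atTop
  have htend0 : Filter.Tendsto (fun n => ‖α (φ n)‖⁻¹) Filter.atTop (nhds 0) :=
    tendsto_inv_atTop_zero.comp hnorm_atTop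
  have hvlim : Filter.Tendsto (fun n => ‖α (φ n)‖⁻¹ • β - u (φ n)) Filter.atTop
      (nhds (-x)) := by
    have := (htend0.smul_const β).sub hlim
    simpa using this
  have hnegK : -x ∈ K := by
    refine hKclosed.mem_of_tendsto hvlim (Filter.Eventually.of_forall fun n => ?_)
    have : ‖α (φ n)‖⁻¹ • (β - α (φ n)) ∈ K :=
      hKcone _ (hαS (φ n)).2 _ (inv_nonneg.2 (hpos (φ n)).le)
    simpa [u, smul_sub] using this
  have hx0 : x = 0 := by
    have : x ∈ K ∩ (-K) := ⟨hxK, by rw [Set.mem_neg]; simpa using hnegK⟩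
    rw [hKstrict] at this
    exact this
  rw [Metric.mem_sphere, dist_zero_right] at hx
  rw [hx0] at hx
  simp at hx
end

section
/- Let (s_0, ..., s_d) be positive reals with s_i^2 ≥ s_{i-1} s_{i+1} for 1 ≤ i ≤ d−1. Then the following are equivalent: (1) s_i^2 = s_{i-1} s_{i+1} for all 1 ≤ i ≤ d−1; (2) s_i^d = s_0^{d−i} s_d^i for all 0 ≤ i ≤ d; (3) s_{d−1}^d = s_0 s_d^{d−1}. -/
/-- Additive core: equivalences for a concave sequence of reals. -/
lemma log_concave_core (d : ℕ) (hd : 2 ≤ d) (t : ℕ → ℝ)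
    (hc : ∀ i, 1 ≤ i → i ≤ d - 1 → t (i - 1) + t (i + 1) ≤ 2 * t i) :
    ((∀ i, 1 ≤ i → i ≤ d - 1 → 2 * t i = t (i - 1) + t (i + 1)) ↔
      (∀ i ≤ d, (d : ℝ) * t i = ((d - i : ℕ) : ℝ) * t 0 + (i : ℝ) * t d)) ∧
    ((∀ i ≤ d, (d : ℝ) * t i = ((d - i : ℕ) : ℝ) * t 0 + (i : ℝ) * t d) ↔
      (d : ℝ) * t (d - 1) = t 0 + ((d - 1 : ℕ) : ℝ) * t d) := by
  have hAB : (∀ i, 1 ≤ i → i ≤ d - 1 → 2 * t i = t (i - 1) + t (i + 1)) →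
      (∀ i ≤ d, (d : ℝ) * t i = ((d - i : ℕ) : ℝ) * t 0 + (i : ℝ) * t d) := by
    intro hA
    have key : ∀ i, i ≤ d → t i = t 0 + (i : ℝ) * (t 1 - t 0) := by
      intro i
      induction i using Nat.strong_induction_on with
      | _ i ih =>
        intro hi
        match i, hi, ih with
        | 0, hi, ih => simp
        | 1, hi, ih => push_cast; ring
        | (n + 2), hi, ih =>
          have hA' := hA (n + 1) (by omega) (by omega)
          simp only [Nat.add_sub_cancel] at hA'
          have e1 := ih n (by omega) (by omega)
          have e2 := ih (n + 1) (by omega) (by omega)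
          push_cast at e1 e2 ⊢
          linarith
    intro i hi
    have e1 := key i hi
    have e2 := key d le_rfl
    rw [Nat.cast_sub hi]
    linear_combination (d : ℝ) * e1 - (i : ℝ) * e2
  have hBC : (∀ i ≤ d, (d : ℝ) * t i = ((d - i : ℕ) : ℝ) * t 0 + (i : ℝ) * t d) →
      (d : ℝ) * t (d - 1) = t 0 + ((d - 1 : ℕ) : ℝ) * t d := by
    intro hB
    have h := hB (d - 1) (by omega)
    have h1 : d - (d - 1) = 1 := by omega
    rw [h1] at h
    simpa using h
  have hCA : ((d : ℝ) * t (d - 1) = t 0 + ((d - 1 : ℕ) : ℝ) * t d) →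
      (∀ i, 1 ≤ i → i ≤ d - 1 → 2 * t i = t (i - 1) + t (i + 1)) := by
    intro hC
    set u : ℕ → ℝ := fun j => t (j + 1) - t j with hu
    have hmono : ∀ j, j + 1 ≤ d - 1 → u (j + 1) ≤ u j := by
      intro j hj
      have h := hc (j + 1) (by omega) hj
      simp only [Nat.add_sub_cancel] at h
      simp only [hu]
      linarith
    have hchain : ∀ k : ℕ, ∀ j, j + k = d - 1 → u (d - 1) ≤ u j := by
      intro k
      induction k with
      | zero => intro j hj; simp at hj; rw [hj]
      | succ n ih =>
        intro j hj
        have h1 : u (j + 1) ≤ u j := hmono j (by omega)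
        have h2 : u (d - 1) ≤ u (j + 1) := ih (j + 1) (by omega)
        linarith
    have hsum : ∑ j ∈ Finset.range (d - 1), u j = t (d - 1) - t 0 := by
      simpa [hu] using Finset.sum_range_sub t (d - 1)
    have hdd : d - 1 + 1 = d := by omega
    have hd1 : ((d - 1 : ℕ) : ℝ) = (d : ℝ) - 1 := by
      rw [Nat.cast_sub (by omega)]; norm_num
    have hCsum : ∑ j ∈ Finset.range (d - 1), (u j - u (d - 1)) = 0 := by
      rw [Finset.sum_sub_distrib, hsum, Finset.sum_const, Finset.card_range,
        nsmul_eq_mul]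
      simp only [hu, hdd]
      rw [hd1] at hC ⊢
      linear_combination hC
    have hall : ∀ j ∈ Finset.range (d - 1), u j - u (d - 1) = 0 := by
      rw [← Finset.sum_eq_zero_iff_of_nonneg]
      · exact hCsum
      · intro j hj
        have := hchain (d - 1 - j) j (by
          have := Finset.mem_range.mp hj; omega)
        linarith
    intro i h1 h2
    have hi1 : u (i - 1) = u (d - 1) := by
      have := hall (i - 1) (Finset.mem_range.mpr (by omega))
      linarith
    have hi2 : u i = u (d - 1) := by
      rcases eq_or_lt_of_le h2 with h | h
      · rw [h]
      · have := hall i (Finset.mem_range.mpr h)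
        linarith
    have e : u (i - 1) = u i := by rw [hi1, hi2]
    simp only [hu] at e
    have hii : i - 1 + 1 = i := by omega
    rw [hii] at e
    linarith
  exact ⟨⟨hAB, fun hB => hCA (hBC hB)⟩,
    ⟨hBC, fun hC => hAB (hCA hC)⟩⟩

/-- Equivalence of the three equality conditions for a positive log-concave sequence. -/
theorem log_concave_equality_equivalences
    (d : ℕ) (hd : 2 ≤ d) (s : ℕ → ℝ)
    (hpos : ∀ i ≤ d, 0 < s i)
    (hlog : ∀ i, 1 ≤ i → i ≤ d - 1 → s i ^ 2 ≥ s (i - 1) * s (i + 1)) :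
    ((∀ i, 1 ≤ i → i ≤ d - 1 → s i ^ 2 = s (i - 1) * s (i + 1)) ↔
      (∀ i ≤ d, s i ^ d = s 0 ^ (d - i) * s d ^ i)) ∧
    ((∀ i ≤ d, s i ^ d = s 0 ^ (d - i) * s d ^ i) ↔
      s (d - 1) ^ d = s 0 * s d ^ (d - 1)) := by
  set t : ℕ → ℝ := fun i => Real.log (s i) with ht
  have leq : ∀ a b : ℝ, 0 < a → 0 < b → (a = b ↔ Real.log a = Real.log b) :=
    fun a b ha hb => ⟨fun h => by rw [h],
      fun h => by rw [← Real.exp_log ha, ← Real.exp_log hb, h]⟩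
  have hc : ∀ i, 1 ≤ i → i ≤ d - 1 → t (i - 1) + t (i + 1) ≤ 2 * t i := by
    intro i h1 h2
    have hp1 : 0 < s (i - 1) := hpos _ (by omega)
    have hp2 : 0 < s (i + 1) := hpos _ (by omega)
    have hp : 0 < s i := hpos _ (by omega)
    have h := Real.log_le_log (mul_pos hp1 hp2) (hlog i h1 h2)
    rw [Real.log_mul hp1.ne' hp2.ne', Real.log_pow] at h
    simp only [ht]
    push_cast at h
    linarith
  have l1 : ∀ i, 1 ≤ i → i ≤ d - 1 →
      (s i ^ 2 = s (i - 1) * s (i + 1) ↔ 2 * t i = t (i - 1) + t (i + 1)) := by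
    intro i h1 h2
    have hp1 : 0 < s (i - 1) := hpos _ (by omega)
    have hp2 : 0 < s (i + 1) := hpos _ (by omega)
    have hp : 0 < s i := hpos _ (by omega)
    rw [leq _ _ (by positivity) (mul_pos hp1 hp2), Real.log_pow,
      Real.log_mul hp1.ne' hp2.ne']
    simp only [ht]
    push_cast
    constructor <;> intro h <;> linarith
  have l2 : ∀ i, i ≤ d →
      (s i ^ d = s 0 ^ (d - i) * s d ^ i ↔
        (d : ℝ) * t i = ((d - i : ℕ) : ℝ) * t 0 + (i : ℝ) * t d) := by
    intro i hi
    have hp0 : 0 < s 0 := hpos _ (by omega)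
    have hpd : 0 < s d := hpos _ le_rfl
    have hp : 0 < s i := hpos _ hi
    rw [leq _ _ (by positivity) (by positivity), Real.log_pow,
      Real.log_mul (by positivity) (by positivity), Real.log_pow, Real.log_pow]
  have l3 : (s (d - 1) ^ d = s 0 * s d ^ (d - 1) ↔
      (d : ℝ) * t (d - 1) = t 0 + ((d - 1 : ℕ) : ℝ) * t d) := by
    have hp0 : 0 < s 0 := hpos _ (by omega)
    have hpd : 0 < s d := hpos _ le_rfl
    have hp : 0 < s (d - 1) := hpos _ (by omega)
    rw [leq _ _ (by positivity) (by positivity), Real.log_pow,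
      Real.log_mul (by positivity) (by positivity), Real.log_pow]
  obtain ⟨hAB, hBC⟩ := log_concave_core d hd t hc
  have p1 : (∀ i, 1 ≤ i → i ≤ d - 1 → s i ^ 2 = s (i - 1) * s (i + 1)) ↔
      (∀ i, 1 ≤ i → i ≤ d - 1 → 2 * t i = t (i - 1) + t (i + 1)) :=
    forall_congr' fun i => imp_congr_right fun h1 => imp_congr_right fun h2 =>
      l1 i h1 h2
  have p2 : (∀ i ≤ d, s i ^ d = s 0 ^ (d - i) * s d ^ i) ↔
      (∀ i ≤ d, (d : ℝ) * t i = ((d - i : ℕ) : ℝ) * t 0 + (i : ℝ) * t d) :=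
    forall_congr' fun i => imp_congr_right fun hi => l2 i hi
  exact ⟨p1.trans (hAB.trans p2.symm), p2.trans (hBC.trans l3.symm)⟩
end

section
/- Let A be a symmetric d-multilinear form on a real vector space, nonnegative on a convex cone N, satisfying the Khovanskii–Teissier inequality A(x^{[i]}, y^{[d−i]}) ≥ A(x^{[d]})^{i/d} A(y^{[d]})^{(d−i)/d} for x, y ∈ N and 0 ≤ i ≤ d. Then the function x ↦ A(x^{[d]})^{1/d} is superadditive on N: A((x+y)^{[d]})^{1/d} ≥ A(x^{[d]})^{1/d} + A(y^{[d]})^{1/d}. -/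
/-- The Khovanskii–Teissier inequalities for a symmetric `d`-multilinear form
nonnegative on a cone `N` imply superadditivity of `x ↦ A(x,...,x)^{1/d}` on `N`. -/
theorem kt_implies_superadditive
    (V : Type*) [AddCommGroup V] [Module ℝ V]
    (d : ℕ) (hd : 1 ≤ d) (A : MultilinearMap ℝ (fun _ : Fin d => V) ℝ)
    (N : Set V)
    (hadd : ∀ x ∈ N, ∀ y ∈ N, x + y ∈ N)
    (hsym : ∀ (z : Fin d → V) (σ : Equiv.Perm (Fin d)), A (z ∘ σ) = A z)
    (hpos : ∀ z : Fin d → V, (∀ i, z i ∈ N) → 0 ≤ A z)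
    (hKT : ∀ x ∈ N, ∀ y ∈ N, ∀ i ≤ d,
      A (fun j : Fin d => if (j : ℕ) < i then x else y) ≥
        (A fun _ => x) ^ ((i : ℝ) / d) * (A fun _ => y) ^ (((d - i : ℕ) : ℝ) / d)) :
    ∀ x ∈ N, ∀ y ∈ N,
      (A fun _ => x + y) ^ ((1 : ℝ) / d) ≥
        (A fun _ => x) ^ ((1 : ℝ) / d) + (A fun _ => y) ^ ((1 : ℝ) / d) := by
  intro x hx y hy
  classical
  set a : ℝ := A fun _ => x with ha
  set b : ℝ := A fun _ => y with hb
  have ha0 : 0 ≤ a := hpos _ (fun _ => hx)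
  have hb0 : 0 ≤ b := hpos _ (fun _ => hy)
  set u : ℝ := a ^ ((1 : ℝ) / d) with hu
  set v : ℝ := b ^ ((1 : ℝ) / d) with hv
  have hu0 : 0 ≤ u := Real.rpow_nonneg ha0 _
  have hv0 : 0 ≤ v := Real.rpow_nonneg hb0 _
  have hdR : (d : ℝ) ≠ 0 := by positivity
  -- rpow conversions
  have hua : ∀ i : ℕ, a ^ ((i : ℝ) / d) = u ^ i := by
    intro i
    rw [hu, ← Real.rpow_natCast (a ^ ((1:ℝ)/d)) i, ← Real.rpow_mul ha0]
    congr 1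
    field_simp
  have hvb : ∀ i : ℕ, b ^ ((i : ℝ) / d) = v ^ i := by
    intro i
    rw [hv, ← Real.rpow_natCast (b ^ ((1:ℝ)/d)) i, ← Real.rpow_mul hb0]
    congr 1
    field_simp
  -- key: for each finset s, the corresponding term is ≥ u^|s| * v^(d-|s|)
  have key : ∀ s : Finset (Fin d),
      u ^ s.card * v ^ (d - s.card) ≤
        A (s.piecewise (fun _ => x) (fun _ => y)) := by
    intro s
    have hcard : s.card ≤ d := by simpa using s.card_le_univ
    -- identify the cardinalities of the two subtypes
    have e1 : Fin s.card ≃ {j : Fin d // (j : ℕ) < s.card} :=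
      { toFun := fun i => ⟨Fin.castLE hcard i, by simpa using i.isLt⟩
        invFun := fun j => ⟨(j : Fin d), j.2⟩
        left_inv := fun i => by ext; simp
        right_inv := fun j => by ext; simp }
    have hct : Fintype.card {j : Fin d // (j : ℕ) < s.card} = s.card := by
      rw [← Fintype.card_congr e1, Fintype.card_fin]
    have hcs : Fintype.card {j : Fin d // j ∈ s} = s.card := Fintype.card_coe s
    have e : {j : Fin d // (j : ℕ) < s.card} ≃ {j : Fin d // j ∈ s} :=
      Fintype.equivOfCardEq (by rw [hct, hcs])
    have ec : {j : Fin d // ¬ (j : ℕ) < s.card} ≃ {j : Fin d // ¬ j ∈ s} :=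
      Fintype.equivOfCardEq (by
        rw [Fintype.card_subtype_compl, Fintype.card_subtype_compl, hct, hcs])
    set σ : Equiv.Perm (Fin d) :=
      ((Equiv.sumCompl (fun j : Fin d => (j : ℕ) < s.card)).symm.trans
        ((e.sumCongr ec).trans (Equiv.sumCompl (fun j : Fin d => j ∈ s)))) with hσ
    have hσmem : ∀ j : Fin d, (j : ℕ) < s.card → σ j ∈ s := by
      intro j hj
      rw [hσ]
      simp only [Equiv.trans_apply]
      rw [Equiv.sumCompl_symm_apply_of_pos (p := fun j : Fin d => (j : ℕ) < s.card) hj]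
      simp only [Equiv.sumCongr_apply, Sum.map_inl, Equiv.sumCompl_apply_inl]
      exact (e ⟨j, hj⟩).2
    have hσnot : ∀ j : Fin d, ¬ (j : ℕ) < s.card → σ j ∉ s := by
      intro j hj
      rw [hσ]
      simp only [Equiv.trans_apply]
      rw [Equiv.sumCompl_symm_apply_of_neg (p := fun j : Fin d => (j : ℕ) < s.card) hj]
      simp only [Equiv.sumCongr_apply, Sum.map_inr, Equiv.sumCompl_apply_inr]
      exact (ec ⟨j, hj⟩).2
    have hcomp : (s.piecewise (fun _ => x) (fun _ => y)) ∘ σ =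
        fun j : Fin d => if (j : ℕ) < s.card then x else y := by
      funext j
      by_cases hj : (j : ℕ) < s.card
      · simp [Function.comp, Finset.piecewise_eq_of_mem _ _ _ (hσmem j hj), hj]
      · simp [Function.comp, Finset.piecewise_eq_of_notMem _ _ _ (hσnot j hj), hj]
    have := hKT x hx y hy s.card hcard
    rw [← ha, ← hb, hua, hvb] at this
    calc u ^ s.card * v ^ (d - s.card)
        ≤ A (fun j : Fin d => if (j : ℕ) < s.card then x else y) := this
      _ = A ((s.piecewise (fun _ => x) (fun _ => y)) ∘ σ) := by rw [hcomp]
      _ = A (s.piecewise (fun _ => x) (fun _ => y)) := hsym _ σ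
  have expand : (A fun _ => x + y) =
      ∑ s : Finset (Fin d), A (s.piecewise (fun _ => x) (fun _ => y)) := by
    rw [show (fun _ : Fin d => x + y) = (fun _ => x) + (fun _ => y) from rfl,
      A.map_add_univ]
  have hsum : (u + v) ^ d ≤ A fun _ => x + y := by
    rw [expand, ← Fin.sum_pow_mul_eq_add_pow]
    exact Finset.sum_le_sum fun s _ => key s
  have hfinal : ((u + v) ^ d) ^ ((1:ℝ)/d) ≤ (A fun _ => x + y) ^ ((1:ℝ)/d) :=
    Real.rpow_le_rpow (by positivity) hsum (by positivity)
  have hroot : ((u + v) ^ d) ^ ((1:ℝ)/d) = u + v := by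
    rw [← Real.rpow_natCast (u + v) d, ← Real.rpow_mul (add_nonneg hu0 hv0)]
    rw [mul_one_div, div_self hdR, Real.rpow_one]
  rw [hroot] at hfinal
  exact hfinal
end
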